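/- Let β(s,t) = c₁·s^{a₁}·b₁^t with c₁, a₁ > 0 and 0 < b₁ < 1, and let ρ̲(s,t) = c₂·s^{a₂}·b₂^t with c₂, a₂ > 0 and 0 < b₂ < 1. If b₂^{1/a₂} ≥ b₁^{1/a₁}, then for every K-function π there exists a K-function π′ such that c₁·(3·(π(s)/(c₂·b₂^t))^{1/a₂})^{a₁}·b₁^t ≤ π′(s) for all s ≥ 0 and t ≥ 0. -/

import Mathlib

open Set

/-- A K-function: continuous, zero at zero, strictly increasing on `[0, ∞)`. -/
def IsKFun (f : ℝ → ℝ) : Prop :=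
  ContinuousOn f (Set.Ici 0) ∧ f 0 = 0 ∧ StrictMonoOn f (Set.Ici 0)

/-- exponential-form key stability condition. With
`β(s,t) = c₁ s^{a₁} b₁^t` and `ρ̲(s,t) = c₂ s^{a₂} b₂^t`, `0 < b₁, b₂ < 1`,
if `b₂^{1/a₂} ≥ b₁^{1/a₁}` then for every K-function `π` there is a K-function `π'`
with `c₁ (3 (π(s)/(c₂ b₂^t))^{1/a₂})^{a₁} b₁^t ≤ π'(s)` for all `s ≥ 0`, `t ≥ 0`. -/
theorem exponential_key_stability (c₁ a₁ b₁ c₂ a₂ b₂ : ℝ)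
    (hc₁ : 0 < c₁) (ha₁ : 0 < a₁) (hb₁0 : 0 < b₁) (hb₁1 : b₁ < 1)
    (hc₂ : 0 < c₂) (ha₂ : 0 < a₂) (hb₂0 : 0 < b₂) (hb₂1 : b₂ < 1)
    (hab : b₁ ^ (1 / a₁) ≤ b₂ ^ (1 / a₂)) (π : ℝ → ℝ) (hπ : IsKFun π) :
    ∃ π' : ℝ → ℝ, IsKFun π' ∧ ∀ s ≥ (0 : ℝ), ∀ t ≥ (0 : ℝ),
      c₁ * (3 * (π s / (c₂ * b₂ ^ t)) ^ (1 / a₂)) ^ a₁ * b₁ ^ t ≤ π' s := by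
  obtain ⟨hπc, hπ0, hπm⟩ := hπ
  have hγ : 0 < a₁ / a₂ := div_pos ha₁ ha₂
  have hπnn : ∀ s ∈ Set.Ici (0:ℝ), 0 ≤ π s := by
    intro s hs
    rcases eq_or_lt_of_le (Set.mem_Ici.mp hs : (0:ℝ) ≤ s) with h | h
    · simp [← h, hπ0]
    · have := hπm (le_refl (0:ℝ)) hs h
      rw [hπ0] at this
      exact this.le
  refine ⟨fun s => c₁ * 3 ^ a₁ * (π s / c₂) ^ (a₁ / a₂), ⟨?_, ?_, ?_⟩, ?_⟩
  · exact continuousOn_const.mul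
      ((hπc.div_const c₂).rpow_const (fun x hx => Or.inr hγ.le))
  · simp [hπ0, Real.zero_rpow hγ.ne']
  · intro x hx y hy hxy
    have hlt : π x / c₂ < π y / c₂ := by gcongr; exact hπm hx hy hxy
    have h1 : (π x / c₂) ^ (a₁ / a₂) < (π y / c₂) ^ (a₁ / a₂) :=
      Real.rpow_lt_rpow (div_nonneg (hπnn x hx) hc₂.le) hlt hγ
    have hpos : 0 < c₁ * 3 ^ a₁ := by positivity
    exact mul_lt_mul_of_pos_left h1 hpos
  · intro s hs t ht
    have hps := hπnn s hs
    have hb2t : 0 < b₂ ^ t := Real.rpow_pos_of_pos hb₂0 t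
    have hu : 0 ≤ π s / (c₂ * b₂ ^ t) := by positivity
    have key : b₁ ^ t ≤ (b₂ ^ t) ^ (a₁ / a₂) := by
      have h := Real.rpow_le_rpow (Real.rpow_nonneg hb₁0.le _) hab
        (by positivity : (0:ℝ) ≤ t * a₁)
      rw [← Real.rpow_mul hb₁0.le, ← Real.rpow_mul hb₂0.le] at h
      have e1 : 1 / a₁ * (t * a₁) = t := by field_simp
      have e2 : 1 / a₂ * (t * a₁) = t * (a₁ / a₂) := by field_simp
      rw [e1, e2] at h
      rwa [Real.rpow_mul hb₂0.le] at h
    have expand : c₁ * (3 * (π s / (c₂ * b₂ ^ t)) ^ (1 / a₂)) ^ a₁ * b₁ ^ t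
        = c₁ * 3 ^ a₁ * (π s / c₂) ^ (a₁ / a₂) * (b₁ ^ t / (b₂ ^ t) ^ (a₁ / a₂)) := by
      rw [Real.mul_rpow (by norm_num : (0:ℝ) ≤ 3) (Real.rpow_nonneg hu _),
        ← Real.rpow_mul hu, (by ring : 1 / a₂ * a₁ = a₁ / a₂), ← div_div,
        Real.div_rpow (div_nonneg hps hc₂.le) hb2t.le]
      ring
    calc c₁ * (3 * (π s / (c₂ * b₂ ^ t)) ^ (1 / a₂)) ^ a₁ * b₁ ^ t
        = c₁ * 3 ^ a₁ * (π s / c₂) ^ (a₁ / a₂) * (b₁ ^ t / (b₂ ^ t) ^ (a₁ / a₂)) := expand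
      _ ≤ c₁ * 3 ^ a₁ * (π s / c₂) ^ (a₁ / a₂) * 1 := by
          refine mul_le_mul_of_nonneg_left ?_ (by positivity)
          rw [div_le_one (by positivity)]
          exact key
      _ = c₁ * 3 ^ a₁ * (π s / c₂) ^ (a₁ / a₂) := mul_one _
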